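/- Kolmogorov–Chentsov inequality: Let T be an extended pseudo-metric space with bounded covering number with constant c > 0 and exponent d > 0, let E be an extended pseudo-metric space, and let (X_t)_{t∈T} be a stochastic process satisfying the Kolmogorov condition for exponents (p, q) with constant M, where p > 0 and q > d. Then for every β ∈ (0, (q − d)/p) there exists a finite constant L (depending only on T, c, d, p, q, β) such that for every countable subset T' ⊆ T, E[ sup_{s,t ∈ T'} d_E(X_s, X_t)^p / d_T(s, t)^{βp} ] ≤ M · L, where the ratio is interpreted with the convention 0/0 = 0. -/

import Mathlib

open MeasureTheory ENNReal NNReal Set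

/-- A subset `A` of a pseudo-emetric space has bounded (internal) covering number with constant
`c` and exponent `d` if for every `ε ∈ (0, diam A]`, `A` can be covered by at most `c * ε ^ (-d)`
balls of radius `ε` centered in `A`. -/
def HasBoundedInternalCoveringNumber {T : Type*} [PseudoEMetricSpace T]
    (A : Set T) (c : ℝ≥0∞) (d : ℝ) : Prop :=
  ∀ ε : ℝ≥0∞, 0 < ε → ε ≤ EMetric.diam A →
    ∃ S : Finset T, ↑S ⊆ A ∧ (∀ t ∈ A, ∃ s ∈ S, edist t s ≤ ε) ∧
      (S.card : ℝ≥0∞) ≤ c * ε ^ (-d)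

/-- A stochastic process `X : T → Ω → E` satisfies the Kolmogorov condition for exponents
`(p, q)` with constant `M` if the pair `(X s, X t)` is measurable for the Borel σ-algebra on
`E × E` for all `s t : T`, and `E[d_E(X s, X t) ^ p] ≤ M * d_T(s, t) ^ q`. -/
def IsKolmogorovProcess {T Ω E : Type*} [PseudoEMetricSpace T] [PseudoEMetricSpace E]
    [MeasurableSpace Ω] (X : T → Ω → E) (P : Measure Ω) (p q : ℝ) (M : ℝ≥0) : Prop :=
  (∀ s t : T, @Measurable Ω (E × E) _ (borel (E × E)) fun ω => (X s ω, X t ω)) ∧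
  ∀ s t : T, ∫⁻ ω, edist (X s ω) (X t ω) ^ p ∂P ≤ (M : ℝ≥0∞) * edist s t ^ q

noncomputable section
open scoped Classical

namespace KCAux


lemma add_rpow_le {p : ℝ} (hp : 0 ≤ p) (a b : ℝ≥0∞) :
    (a + b) ^ p ≤ 2 ^ p * (a ^ p + b ^ p) := by
  calc (a + b) ^ p ≤ (2 * max a b) ^ p := by
        apply ENNReal.rpow_le_rpow _ hp
        rw [two_mul]
        exact add_le_add (le_max_left a b) (le_max_right a b)
    _ = 2 ^ p * (max a b) ^ p := ENNReal.mul_rpow_of_nonneg _ _ hp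
    _ ≤ 2 ^ p * (a ^ p + b ^ p) := by
        gcongr
        rcases max_cases a b with ⟨h, _⟩ | ⟨h, _⟩ <;> rw [h]
        · exact le_self_add
        · exact le_add_self

lemma iSup_rpow_le {ι : Sort*} (f : ι → ℝ≥0∞) {p : ℝ} (hp : 0 < p) :
    (⨆ i, f i) ^ p ≤ ⨆ i, f i ^ p := by
  have h1 : (⨆ i, f i) ≤ (⨆ i, f i ^ p) ^ p⁻¹ := by
    apply iSup_le fun i => ?_
    have : f i = (f i ^ p) ^ p⁻¹ := by
      rw [← ENNReal.rpow_mul, mul_inv_cancel₀ hp.ne', ENNReal.rpow_one]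
    rw [this]
    exact ENNReal.rpow_le_rpow (le_iSup (fun i => f i ^ p) i) (by positivity)
  calc (⨆ i, f i) ^ p ≤ ((⨆ i, f i ^ p) ^ p⁻¹) ^ p := ENNReal.rpow_le_rpow h1 hp.le
    _ = ⨆ i, f i ^ p := by rw [← ENNReal.rpow_mul, inv_mul_cancel₀ hp.ne', ENNReal.rpow_one]

lemma min_le_rpow_interp {x y : ℝ≥0∞} (hx : x ≠ ∞) {θ : ℝ} (h0 : 0 ≤ θ) (h1 : θ ≤ 1) :
    min x y ≤ x ^ (1 - θ) * y ^ θ := by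
  rcases eq_or_ne (min x y) 0 with h | h
  · rw [h]; exact zero_le
  · have hfin : min x y ≠ ∞ := by
      exact ne_top_of_le_ne_top hx (min_le_left x y)
    calc min x y = (min x y) ^ (1 - θ) * (min x y) ^ θ := by
          rw [← ENNReal.rpow_add _ _ h hfin, sub_add_cancel, ENNReal.rpow_one]
      _ ≤ x ^ (1 - θ) * y ^ θ :=
          mul_le_mul' (ENNReal.rpow_le_rpow (min_le_left x y) (by linarith))
            (ENNReal.rpow_le_rpow (min_le_right x y) h0)

lemma pow_rpow_comm (x : ℝ≥0∞) (i : ℕ) (p : ℝ) : (x ^ i) ^ p = (x ^ p) ^ i := by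
  rw [← ENNReal.rpow_natCast x i, ← ENNReal.rpow_mul, mul_comm, ENNReal.rpow_mul,
    ENNReal.rpow_natCast]

lemma two_rpow_ne_top {a : ℝ} : (2:ℝ≥0∞) ^ a ≠ ∞ := by
  simp [ENNReal.rpow_eq_top_iff]


variable {T : Type*} [PseudoEMetricSpace T] {E : Type*} [PseudoEMetricSpace E]

/-- the points of `C` within distance `ρ * 2^j` of `u`. -/
def kball (C : Finset T) (ρ : ℝ≥0∞) (j : ℕ) (u : T) : Finset T :=
  C.filter (fun v => edist u v ≤ ρ * 2 ^ j)

/-- number of points of `C` within distance `ρ * 2^j` of `u`. -/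
def knn (C : Finset T) (ρ : ℝ≥0∞) (j : ℕ) (u : T) : ℕ := (kball C ρ j u).card

lemma kball_subset_kball {C : Finset T} {ρ : ℝ≥0∞} {j k : ℕ} (h : j ≤ k) (u : T) :
    kball C ρ j u ⊆ kball C ρ k u := by
  intro v hv
  simp only [kball, Finset.mem_filter] at hv ⊢
  exact ⟨hv.1, hv.2.trans (by gcongr <;> simp [h, one_le_two])⟩

lemma mem_kball_self {C : Finset T} {ρ : ℝ≥0∞} {j : ℕ} {u : T} (hu : u ∈ C) :
    u ∈ kball C ρ j u := by
  simp [kball, hu]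

lemma knn_pos {C : Finset T} {ρ : ℝ≥0∞} {j : ℕ} {u : T} (hu : u ∈ C) :
    0 < knn C ρ j u := Finset.card_pos.2 ⟨u, mem_kball_self hu⟩

lemma knn_mono {C : Finset T} {ρ : ℝ≥0∞} {j k : ℕ} (h : j ≤ k) (u : T) :
    knn C ρ j u ≤ knn C ρ k u := Finset.card_le_card (kball_subset_kball h u)

lemma knn_le_card {C : Finset T} {ρ : ℝ≥0∞} {j : ℕ} {u : T} : knn C ρ j u ≤ C.card :=
  Finset.card_filter_le _ _

lemma kball_subset_of_close {C : Finset T} {ρ : ℝ≥0∞} {j : ℕ} {x y : T}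
    (h : edist y x ≤ ρ) : kball C ρ j x ⊆ kball C ρ (j + 1) y := by
  intro v hv
  simp only [kball, Finset.mem_filter] at hv ⊢
  refine ⟨hv.1, ?_⟩
  calc edist y v ≤ edist y x + edist x v := edist_triangle _ _ _
    _ ≤ ρ + ρ * 2 ^ j := add_le_add h hv.2
    _ ≤ ρ * 2 ^ (j + 1) := by
        have h1 : (1:ℝ≥0∞) ≤ 2 ^ j := one_le_pow_of_one_le' (by norm_num : (1:ℝ≥0∞) ≤ 2) j
        rw [pow_succ, ← mul_assoc, mul_two]
        exact add_le_add (le_mul_of_one_le_right' h1) le_rfl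

lemma exists_doubling {C : Finset T} {ρ : ℝ≥0∞} {A : ℕ} (hA : 1 ≤ A) {x : T} (hx : x ∈ C) :
    ∃ j, knn C ρ (j + 2) x ≤ 2 ^ A * knn C ρ j x := by
  by_contra hcon
  push_neg at hcon
  have key : ∀ k, 2 ^ k ≤ knn C ρ (2 * k) x := by
    intro k
    induction k with
    | zero => simpa using Nat.one_le_iff_ne_zero.mpr (knn_pos hx).ne'
    | succ k ih =>
      have h1 : 2 ^ A * knn C ρ (2 * k) x < knn C ρ (2 * k + 2) x := hcon (2 * k)
      have h2 : 2 * (k + 1) = 2 * k + 2 := by ring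
      rw [h2]
      calc 2 ^ (k + 1) = 2 * 2 ^ k := by ring
        _ ≤ 2 ^ A * knn C ρ (2 * k) x := by
            apply Nat.mul_le_mul _ ih
            calc 2 = 2 ^ 1 := (pow_one 2).symm
              _ ≤ 2 ^ A := Nat.pow_le_pow_right (by norm_num) hA
        _ ≤ knn C ρ (2 * k + 2) x := h1.le
  have := key C.card
  have h2 := knn_le_card (C := C) (ρ := ρ) (j := 2 * C.card) (u := x)
  have := Nat.lt_two_pow_self (n := C.card)
  omega


/-- the minimal doubling scale of `x`. -/
def kdub (C : Finset T) (ρ : ℝ≥0∞) (A : ℕ) (hA : 1 ≤ A) {x : T} (hx : x ∈ C) : ℕ :=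
  Nat.find (exists_doubling (C := C) (ρ := ρ) hA hx)

lemma kdub_spec (C : Finset T) (ρ : ℝ≥0∞) {A : ℕ} (hA : 1 ≤ A) {x : T} (hx : x ∈ C) :
    knn C ρ (kdub C ρ A hA hx + 2) x ≤ 2 ^ A * knn C ρ (kdub C ρ A hA hx) x :=
  Nat.find_spec (exists_doubling (C := C) (ρ := ρ) hA hx)

lemma kdub_min (C : Finset T) (ρ : ℝ≥0∞) {A : ℕ} (hA : 1 ≤ A) {x : T} (hx : x ∈ C)
    {i : ℕ} (hi : i < kdub C ρ A hA hx) :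
    2 ^ A * knn C ρ i x < knn C ρ (i + 2) x := by
  have := Nat.find_min (exists_doubling (C := C) (ρ := ρ) hA hx) hi
  omega

lemma knn_growth (C : Finset T) (ρ : ℝ≥0∞) {A : ℕ} (hA : 1 ≤ A) {x : T} (hx : x ∈ C) :
    ∀ i, i ≤ kdub C ρ A hA hx → 2 ^ (A * (i / 2)) ≤ knn C ρ i x := by
  intro i
  induction i using Nat.twoStepInduction with
  | zero => intro _; simpa using Nat.one_le_iff_ne_zero.mpr (knn_pos hx).ne'
  | one => intro _; simpa using Nat.one_le_iff_ne_zero.mpr (knn_pos hx).ne'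
  | more i ih _ =>
    intro hile
    have h1 : i ≤ kdub C ρ A hA hx := by omega
    have h2 : i < kdub C ρ A hA hx := by omega
    have h3 := kdub_min C ρ hA hx h2
    have h4 : 2 ^ (A * (i / 2)) ≤ knn C ρ i x := ih h1
    have h5 : (i + 2) / 2 = i / 2 + 1 := by omega
    calc 2 ^ (A * ((i + 2) / 2)) = 2 ^ A * 2 ^ (A * (i / 2)) := by
          rw [h5]; ring
      _ ≤ 2 ^ A * knn C ρ i x := Nat.mul_le_mul_left _ h4
      _ ≤ knn C ρ (i + 2) x := h3.le


/-- the set of points whose neighbourhood count at scale `j` meets the threshold. -/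
def kthr (C : Finset T) (ρ : ℝ≥0∞) (A : ℕ) (j : ℕ) : Finset T :=
  C.filter (fun u => 2 ^ (A * ((j - 1) / 2)) ≤ knn C ρ j u)

/-- the master weighted sum of pair moments. -/
def kS (C : Finset T) (ρ : ℝ≥0∞) (A : ℕ) (g : T → E) (p : ℝ) : ℝ≥0∞ :=
  ∑' j : ℕ, ∑ u ∈ kthr C ρ A j,
    (∑ v ∈ kball C ρ (j + 1) u, edist (g u) (g v) ^ p) / (knn C ρ (j + 1) u : ℝ≥0∞)

lemma star_pointwise (C : Finset T) (ρ : ℝ≥0∞) {A : ℕ} (hA : 1 ≤ A) (g : T → E) {p : ℝ}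
    (hp : 0 < p) {x y : T} (hx : x ∈ C) (hy : y ∈ C) (hxy : edist x y ≤ ρ) :
    edist (g x) (g y) ^ p ≤ 2 ^ p * 2 ^ (A + 1) * kS C ρ A g p := by
  classical
  set j := kdub C ρ A hA hx with hj
  set a := knn C ρ j x with ha
  have hyx : edist y x ≤ ρ := by rwa [edist_comm]
  have ha0 : 0 < a := knn_pos hx
  have haC : ((a : ℝ≥0∞)) ≠ 0 := by exact_mod_cast ha0.ne'
  have haT : ((a : ℝ≥0∞)) ≠ ∞ := ENNReal.natCast_ne_top a
  -- the two half-sums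
  set gx : ℝ≥0∞ := (∑ v ∈ kball C ρ (j + 1) x, edist (g x) (g v) ^ p) /
      (knn C ρ (j + 1) x : ℝ≥0∞) with hgx
  set gy : ℝ≥0∞ := (∑ v ∈ kball C ρ (j + 1) y, edist (g y) (g v) ^ p) /
      (knn C ρ (j + 1) y : ℝ≥0∞) with hgy
  have hnx0 : ((knn C ρ (j + 1) x : ℝ≥0∞)) ≠ 0 := by
    exact_mod_cast (knn_pos (j := j + 1) hx).ne'
  have hny0 : ((knn C ρ (j + 1) y : ℝ≥0∞)) ≠ 0 := by
    exact_mod_cast (knn_pos (j := j + 1) hy).ne'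
  -- counting comparisons
  have hcx : knn C ρ (j + 1) x ≤ 2 ^ A * a := by
    calc knn C ρ (j + 1) x ≤ knn C ρ (j + 2) x := knn_mono (by omega) x
      _ ≤ 2 ^ A * a := kdub_spec C ρ hA hx
  have hcy : knn C ρ (j + 1) y ≤ 2 ^ A * a := by
    calc knn C ρ (j + 1) y ≤ knn C ρ (j + 2) x :=
          Finset.card_le_card (kball_subset_of_close hxy)
      _ ≤ 2 ^ A * a := kdub_spec C ρ hA hx
  -- the averaged triangle inequality
  have key : (a : ℝ≥0∞) * edist (g x) (g y) ^ p ≤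
      2 ^ p * ((knn C ρ (j + 1) x : ℝ≥0∞) * gx + (knn C ρ (j + 1) y : ℝ≥0∞) * gy) := by
    have hcancelx : ((knn C ρ (j + 1) x : ℝ≥0∞)) * gx =
        ∑ v ∈ kball C ρ (j + 1) x, edist (g x) (g v) ^ p :=
      ENNReal.mul_div_cancel hnx0 (ENNReal.natCast_ne_top _)
    have hcancely : ((knn C ρ (j + 1) y : ℝ≥0∞)) * gy =
        ∑ v ∈ kball C ρ (j + 1) y, edist (g y) (g v) ^ p :=
      ENNReal.mul_div_cancel hny0 (ENNReal.natCast_ne_top _)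
    rw [hcancelx, hcancely]
    calc (a : ℝ≥0∞) * edist (g x) (g y) ^ p
        = ∑ _z ∈ kball C ρ j x, edist (g x) (g y) ^ p := by
          rw [Finset.sum_const, nsmul_eq_mul]; rfl
      _ ≤ ∑ z ∈ kball C ρ j x, 2 ^ p * (edist (g x) (g z) ^ p + edist (g y) (g z) ^ p) := by
          apply Finset.sum_le_sum
          intro z _
          have htri : edist (g x) (g y) ≤ edist (g x) (g z) + edist (g y) (g z) := by
            rw [edist_comm (g y) (g z)]
            exact edist_triangle _ _ _
          calc edist (g x) (g y) ^ p ≤ (edist (g x) (g z) + edist (g y) (g z)) ^ p :=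
                ENNReal.rpow_le_rpow htri hp.le
            _ ≤ 2 ^ p * (edist (g x) (g z) ^ p + edist (g y) (g z) ^ p) :=
                add_rpow_le hp.le _ _
      _ = 2 ^ p * (∑ z ∈ kball C ρ j x, edist (g x) (g z) ^ p +
            ∑ z ∈ kball C ρ j x, edist (g y) (g z) ^ p) := by
          rw [← Finset.mul_sum, Finset.sum_add_distrib]
      _ ≤ 2 ^ p * (∑ v ∈ kball C ρ (j + 1) x, edist (g x) (g v) ^ p +
            ∑ v ∈ kball C ρ (j + 1) y, edist (g y) (g v) ^ p) := by
          refine mul_le_mul' le_rfl (add_le_add ?_ ?_)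
          · exact Finset.sum_le_sum_of_subset (kball_subset_kball (Nat.le_succ j) x)
          · exact Finset.sum_le_sum_of_subset (kball_subset_of_close hyx)
  -- cancel `a`
  have main : edist (g x) (g y) ^ p ≤ 2 ^ p * 2 ^ A * (gx + gy) := by
    rw [← ENNReal.mul_le_mul_iff_right haC haT]
    calc (a : ℝ≥0∞) * edist (g x) (g y) ^ p
        ≤ 2 ^ p * ((knn C ρ (j + 1) x : ℝ≥0∞) * gx + (knn C ρ (j + 1) y : ℝ≥0∞) * gy) := key
      _ ≤ 2 ^ p * (((2 ^ A * a : ℕ) : ℝ≥0∞) * gx + ((2 ^ A * a : ℕ) : ℝ≥0∞) * gy) := by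
          gcongr <;> exact_mod_cast ‹_›
      _ = (a : ℝ≥0∞) * (2 ^ p * 2 ^ A * (gx + gy)) := by
          push_cast
          ring
  -- both half-sums are bounded by the master sum
  have hthrx : x ∈ kthr C ρ A j := by
    simp only [kthr, Finset.mem_filter]
    refine ⟨hx, le_trans ?_ (knn_growth C ρ hA hx j le_rfl)⟩
    exact Nat.pow_le_pow_right (by norm_num) (Nat.mul_le_mul_left _ (Nat.div_le_div_right (by omega)))
  have hthry : y ∈ kthr C ρ A j := by
    simp only [kthr, Finset.mem_filter]
    refine ⟨hy, ?_⟩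
    rcases Nat.eq_zero_or_pos j with h0 | hpos
    · rw [h0]; simpa using Nat.one_le_iff_ne_zero.mpr (knn_pos hy).ne'
    · have hsub : kball C ρ (j - 1) x ⊆ kball C ρ j y := by
        have := kball_subset_of_close (C := C) (ρ := ρ) (j := j - 1) hyx
        rwa [Nat.sub_add_cancel hpos] at this
      calc 2 ^ (A * ((j - 1) / 2)) ≤ knn C ρ (j - 1) x :=
            knn_growth C ρ hA hx (j - 1) (by omega)
        _ ≤ knn C ρ j y := Finset.card_le_card hsub
  have hgxS : gx ≤ kS C ρ A g p := by
    refine le_trans ?_ (ENNReal.le_tsum j)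
    exact Finset.single_le_sum
      (f := fun u => (∑ v ∈ kball C ρ (j + 1) u, edist (g u) (g v) ^ p) /
        (knn C ρ (j + 1) u : ℝ≥0∞)) (fun u _ => zero_le) hthrx
  have hgyS : gy ≤ kS C ρ A g p := by
    refine le_trans ?_ (ENNReal.le_tsum j)
    exact Finset.single_le_sum
      (f := fun u => (∑ v ∈ kball C ρ (j + 1) u, edist (g u) (g v) ^ p) /
        (knn C ρ (j + 1) u : ℝ≥0∞)) (fun u _ => zero_le) hthry
  calc edist (g x) (g y) ^ p ≤ 2 ^ p * 2 ^ A * (gx + gy) := main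
    _ ≤ 2 ^ p * 2 ^ A * (kS C ρ A g p + kS C ρ A g p) := by gcongr
    _ = 2 ^ p * 2 ^ (A + 1) * kS C ρ A g p := by ring


section Integrated

variable {Ω : Type*} [MeasurableSpace Ω] {P : Measure Ω} {X : T → Ω → E} {p q : ℝ} {M : ℝ≥0}

lemma measurable_edistX (hX : IsKolmogorovProcess X P p q M) (s t : T) :
    Measurable fun ω => edist (X s ω) (X t ω) := by
  letI : MeasurableSpace (E × E) := borel (E × E)
  haveI : BorelSpace (E × E) := ⟨rfl⟩
  exact (continuous_edist.measurable).comp (hX.1 s t)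

lemma measurable_edistX_rpow (hX : IsKolmogorovProcess X P p q M) (s t : T) {r : ℝ} :
    Measurable fun ω => edist (X s ω) (X t ω) ^ r :=
  (measurable_edistX hX s t).pow_const r

lemma measurable_kS (hX : IsKolmogorovProcess X P p q M) (C : Finset T) (ρ : ℝ≥0∞) (A : ℕ) :
    Measurable fun ω => kS C ρ A (fun t => X t ω) p := by
  apply Measurable.ennreal_tsum
  intro j
  apply Finset.measurable_sum
  intro u _
  exact (Finset.measurable_sum _ fun v _ => measurable_edistX_rpow hX u v).div_const _

lemma lintegral_kS_le (hX : IsKolmogorovProcess X P p q M) (hq : 0 ≤ q)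
    (C : Finset T) (ρ : ℝ≥0∞) (A : ℕ) :
    ∫⁻ ω, kS C ρ A (fun t => X t ω) p ∂P ≤
      M * ρ ^ q * ∑' j : ℕ, ((kthr C ρ A j).card : ℝ≥0∞) * 2 ^ (((j : ℝ) + 1) * q) := by
  rw [show (fun ω => kS C ρ A (fun t => X t ω) p) = fun ω => ∑' j : ℕ, ∑ u ∈ kthr C ρ A j,
      (∑ v ∈ kball C ρ (j + 1) u, edist (X u ω) (X v ω) ^ p) / (knn C ρ (j + 1) u : ℝ≥0∞)
    from rfl, lintegral_tsum fun j => ((Finset.measurable_sum _ fun u _ =>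
      (Finset.measurable_sum _ fun v _ => measurable_edistX_rpow hX u v).div_const _)).aemeasurable]
  rw [show M * ρ ^ q * ∑' j : ℕ, ((kthr C ρ A j).card : ℝ≥0∞) * 2 ^ (((j : ℝ) + 1) * q)
      = ∑' j : ℕ, ((kthr C ρ A j).card : ℝ≥0∞) * (M * ρ ^ q * 2 ^ (((j : ℝ) + 1) * q)) by
    rw [← ENNReal.tsum_mul_left]; congr 1; ext j; ring]
  apply ENNReal.tsum_le_tsum
  intro j
  rw [lintegral_finset_sum _ fun u _ => (Finset.measurable_sum _ fun v _ =>
    measurable_edistX_rpow hX u v).div_const _]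
  have hterm : ∀ u ∈ kthr C ρ A j,
      (∫⁻ ω, (∑ v ∈ kball C ρ (j + 1) u, edist (X u ω) (X v ω) ^ p) /
          (knn C ρ (j + 1) u : ℝ≥0∞) ∂P) ≤ M * ρ ^ q * 2 ^ (((j : ℝ) + 1) * q) := by
    intro u hu
    have huC : u ∈ C := Finset.mem_of_mem_filter u hu
    have hn0 : ((knn C ρ (j + 1) u : ℝ≥0∞)) ≠ 0 := by
      exact_mod_cast (knn_pos (j := j + 1) huC).ne'
    have hnT : ((knn C ρ (j + 1) u : ℝ≥0∞)) ≠ ∞ := ENNReal.natCast_ne_top _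
    simp_rw [div_eq_mul_inv]
    rw [lintegral_mul_const' _ _ (by simp [hn0])]
    have hS : (∫⁻ ω, ∑ v ∈ kball C ρ (j + 1) u, edist (X u ω) (X v ω) ^ p ∂P) ≤
        (knn C ρ (j + 1) u : ℝ≥0∞) * (M * ρ ^ q * 2 ^ (((j : ℝ) + 1) * q)) := by
      rw [lintegral_finset_sum _ fun v _ => measurable_edistX_rpow hX u v]
      calc ∑ v ∈ kball C ρ (j + 1) u, ∫⁻ ω, edist (X u ω) (X v ω) ^ p ∂P
          ≤ ∑ v ∈ kball C ρ (j + 1) u, M * ρ ^ q * 2 ^ (((j : ℝ) + 1) * q) := by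
            apply Finset.sum_le_sum
            intro v hv
            have hd : edist u v ≤ ρ * 2 ^ (j + 1) := by
              simp only [kball, Finset.mem_filter] at hv; exact hv.2
            calc ∫⁻ ω, edist (X u ω) (X v ω) ^ p ∂P ≤ M * edist u v ^ q := hX.2 u v
              _ ≤ M * (ρ * 2 ^ (j + 1)) ^ q :=
                  mul_le_mul' le_rfl (ENNReal.rpow_le_rpow hd hq)
              _ = M * ρ ^ q * 2 ^ (((j : ℝ) + 1) * q) := by
                  rw [ENNReal.mul_rpow_of_nonneg _ _ hq, ← mul_assoc]
                  congr 1
                  rw [← ENNReal.rpow_natCast 2 (j + 1), ← ENNReal.rpow_mul]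
                  norm_num
          _ = (knn C ρ (j + 1) u : ℝ≥0∞) * (M * ρ ^ q * 2 ^ (((j : ℝ) + 1) * q)) := by
            rw [Finset.sum_const, nsmul_eq_mul]; rfl
    calc (∫⁻ ω, ∑ v ∈ kball C ρ (j + 1) u, edist (X u ω) (X v ω) ^ p ∂P) *
          ((knn C ρ (j + 1) u : ℝ≥0∞))⁻¹
        ≤ ((knn C ρ (j + 1) u : ℝ≥0∞) * (M * ρ ^ q * 2 ^ (((j : ℝ) + 1) * q))) *
          ((knn C ρ (j + 1) u : ℝ≥0∞))⁻¹ := by gcongr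
      _ = M * ρ ^ q * 2 ^ (((j : ℝ) + 1) * q) := by
          rw [mul_comm ((knn C ρ (j + 1) u : ℝ≥0∞)) _, mul_assoc,
            ENNReal.mul_inv_cancel hn0 hnT, mul_one]
  calc ∑ u ∈ kthr C ρ A j, ∫⁻ ω, (∑ v ∈ kball C ρ (j + 1) u, edist (X u ω) (X v ω) ^ p) /
        (knn C ρ (j + 1) u : ℝ≥0∞) ∂P
      ≤ ∑ _u ∈ kthr C ρ A j, M * ρ ^ q * 2 ^ (((j : ℝ) + 1) * q) := Finset.sum_le_sum hterm
    _ = ((kthr C ρ A j).card : ℝ≥0∞) * (M * ρ ^ q * 2 ^ (((j : ℝ) + 1) * q)) := by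
        rw [Finset.sum_const, nsmul_eq_mul]

lemma kthr_card_le (C : Finset T) (ρ : ℝ≥0∞) (A : ℕ) (j : ℕ) :
    ((kthr C ρ A j).card : ℝ≥0∞) ≤
      min (C.card : ℝ≥0∞) ((C.card : ℝ≥0∞) * C.card / 2 ^ (A * ((j - 1) / 2))) := by
  refine le_min ?_ ?_
  · exact_mod_cast Finset.card_filter_le _ _
  · have hnat : (kthr C ρ A j).card * 2 ^ (A * ((j - 1) / 2)) ≤ C.card * C.card := by
      calc (kthr C ρ A j).card * 2 ^ (A * ((j - 1) / 2))
          = (kthr C ρ A j).card • 2 ^ (A * ((j - 1) / 2)) := (smul_eq_mul _ _).symm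
        _ ≤ ∑ u ∈ kthr C ρ A j, knn C ρ j u := by
            apply Finset.card_nsmul_le_sum
            intro u hu
            simp only [kthr, Finset.mem_filter] at hu
            exact hu.2
        _ ≤ ∑ u ∈ C, knn C ρ j u :=
            Finset.sum_le_sum_of_subset (Finset.filter_subset _ _)
        _ ≤ ∑ _u ∈ C, C.card := Finset.sum_le_sum fun u _ => knn_le_card
        _ = C.card * C.card := by rw [Finset.sum_const, smul_eq_mul]
    rw [ENNReal.le_div_iff_mul_le (Or.inl (by positivity)) (Or.inl (by
      exact pow_ne_top (by norm_num)))]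
    calc ((kthr C ρ A j).card : ℝ≥0∞) * 2 ^ (A * ((j - 1) / 2))
        = (((kthr C ρ A j).card * 2 ^ (A * ((j - 1) / 2)) : ℕ) : ℝ≥0∞) := by push_cast; ring
      _ ≤ ((C.card * C.card : ℕ) : ℝ≥0∞) := by exact_mod_cast hnat
      _ = (C.card : ℝ≥0∞) * C.card := by push_cast; ring

end Integrated

lemma series_le {q θ : ℝ} (hq : 0 < q) (hθ0 : 0 < θ) (hθ1 : θ ≤ 1) {A : ℕ}
    (hA : 2 * q + 2 ≤ θ * A) (N : ℕ) :
    ∑' j : ℕ, min (N : ℝ≥0∞) ((N : ℝ≥0∞) * N / 2 ^ (A * ((j - 1) / 2))) *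
      2 ^ (((j : ℝ) + 1) * q) ≤ 2 ^ (3 * q + 3) * (N : ℝ≥0∞) ^ (1 + θ) := by
  rcases Nat.eq_zero_or_pos N with hN | hN
  · subst hN
    simp
  have hN0 : ((N : ℝ≥0∞)) ≠ 0 := by exact_mod_cast hN.ne'
  have hNT : ((N : ℝ≥0∞)) ≠ ∞ := ENNReal.natCast_ne_top N
  have hterm : ∀ j : ℕ, min (N : ℝ≥0∞) ((N : ℝ≥0∞) * N / 2 ^ (A * ((j - 1) / 2))) *
      2 ^ (((j : ℝ) + 1) * q) ≤ (N : ℝ≥0∞) ^ (1 + θ) * (2 ^ (3 * q + 2) * (2⁻¹ : ℝ≥0∞) ^ j) := by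
    intro j
    set k := A * ((j - 1) / 2) with hk
    have hmin : min (N : ℝ≥0∞) ((N : ℝ≥0∞) * N / 2 ^ k) ≤
        (N : ℝ≥0∞) ^ (1 + θ) / (2 ^ k : ℝ≥0∞) ^ θ := by
      calc min (N : ℝ≥0∞) ((N : ℝ≥0∞) * N / 2 ^ k)
          ≤ (N : ℝ≥0∞) ^ (1 - θ) * ((N : ℝ≥0∞) * N / 2 ^ k) ^ θ :=
            min_le_rpow_interp hNT hθ0.le hθ1
        _ = (N : ℝ≥0∞) ^ (1 - θ) * (((N : ℝ≥0∞) * N) ^ θ / (2 ^ k : ℝ≥0∞) ^ θ) := by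
            rw [ENNReal.div_rpow_of_nonneg _ _ hθ0.le]
        _ = (N : ℝ≥0∞) ^ (1 + θ) / (2 ^ k : ℝ≥0∞) ^ θ := by
            rw [ENNReal.mul_rpow_of_nonneg _ _ hθ0.le, div_eq_mul_inv, div_eq_mul_inv,
              ← mul_assoc, ← mul_assoc, ← ENNReal.rpow_add _ _ hN0 hNT,
              ← ENNReal.rpow_add _ _ hN0 hNT]
            ring_nf
    have hsc : (2 : ℝ≥0∞) ^ (((j : ℝ) + 1) * q) / (2 ^ k : ℝ≥0∞) ^ θ ≤
        2 ^ (3 * q + 2) * (2⁻¹ : ℝ≥0∞) ^ j := by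
      have h2k : ((2 : ℝ≥0∞) ^ k) ^ θ = 2 ^ ((k : ℝ) * θ) := by
        rw [← ENNReal.rpow_natCast 2 k, ← ENNReal.rpow_mul]
      have hinv : ((2 : ℝ≥0∞)⁻¹) ^ j = 2 ^ (-(j : ℝ)) := by
        rw [← ENNReal.rpow_natCast (2⁻¹ : ℝ≥0∞) j, ← ENNReal.rpow_neg_one 2,
          ← ENNReal.rpow_mul]
        norm_num
      rw [h2k, hinv, ← ENNReal.rpow_add _ _ (by norm_num) (by norm_num)]
      rw [ENNReal.div_le_iff (ENNReal.rpow_pos (by norm_num) (by norm_num)).ne' two_rpow_ne_top]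
      rw [← ENNReal.rpow_add _ _ (by norm_num) (by norm_num)]
      apply ENNReal.rpow_le_rpow_of_exponent_le one_le_two
      -- real inequality
      have hx0 : (0 : ℝ) ≤ (((j - 1) / 2 : ℕ) : ℝ) := Nat.cast_nonneg _
      have hxj : (j : ℝ) ≤ 2 * (((j - 1) / 2 : ℕ) : ℝ) + 2 := by
        have : j ≤ 2 * ((j - 1) / 2) + 2 := by omega
        exact_mod_cast this
      have hkx : (k : ℝ) = (A : ℝ) * (((j - 1) / 2 : ℕ) : ℝ) := by
        rw [hk]; push_cast; ring
      set x := (((j - 1) / 2 : ℕ) : ℝ)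
      have h1 : (2 * q + 2) * x ≤ (θ * A) * x := mul_le_mul_of_nonneg_right hA hx0
      have h2 : (q + 1) * ((j : ℝ) - 2) ≤ (q + 1) * (2 * x) := by
        apply mul_le_mul_of_nonneg_left _ (by linarith)
        linarith
      rw [hkx]
      nlinarith [h1, h2]
    calc min (N : ℝ≥0∞) ((N : ℝ≥0∞) * N / 2 ^ k) * 2 ^ (((j : ℝ) + 1) * q)
        ≤ ((N : ℝ≥0∞) ^ (1 + θ) / (2 ^ k : ℝ≥0∞) ^ θ) * 2 ^ (((j : ℝ) + 1) * q) := by gcongr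
      _ = (N : ℝ≥0∞) ^ (1 + θ) * (2 ^ (((j : ℝ) + 1) * q) / (2 ^ k : ℝ≥0∞) ^ θ) := by
          rw [div_eq_mul_inv, div_eq_mul_inv]; ring
      _ ≤ (N : ℝ≥0∞) ^ (1 + θ) * (2 ^ (3 * q + 2) * (2⁻¹ : ℝ≥0∞) ^ j) := by gcongr
  calc ∑' j : ℕ, min (N : ℝ≥0∞) ((N : ℝ≥0∞) * N / 2 ^ (A * ((j - 1) / 2))) *
        2 ^ (((j : ℝ) + 1) * q)
      ≤ ∑' j : ℕ, (N : ℝ≥0∞) ^ (1 + θ) * (2 ^ (3 * q + 2) * (2⁻¹ : ℝ≥0∞) ^ j) :=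
        ENNReal.tsum_le_tsum hterm
    _ = (N : ℝ≥0∞) ^ (1 + θ) * 2 ^ (3 * q + 2) * ∑' j : ℕ, (2⁻¹ : ℝ≥0∞) ^ j := by
        rw [← ENNReal.tsum_mul_left]
        congr 1; ext j; ring
    _ ≤ 2 ^ (3 * q + 3) * (N : ℝ≥0∞) ^ (1 + θ) := by
        rw [ENNReal.tsum_geometric]
        have : ((1 : ℝ≥0∞) - 2⁻¹)⁻¹ = 2 := by
          rw [ENNReal.one_sub_inv_two, inv_inv]
        rw [this]
        have h23 : (2 : ℝ≥0∞) ^ (3 * q + 3) = 2 ^ (3 * q + 2) * 2 := by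
          rw [show 3 * q + 3 = (3 * q + 2) + 1 by ring, ENNReal.rpow_add _ _ (by norm_num)
            (by norm_num), ENNReal.rpow_one]
        rw [h23]
        ring_nf
        exact le_rfl


lemma star_expect {Ω : Type*} [MeasurableSpace Ω] {P : Measure Ω} {X : T → Ω → E}
    {p q : ℝ} {M : ℝ≥0} (hX : IsKolmogorovProcess X P p q M) (hp : 0 < p) (hq : 0 < q)
    {θ : ℝ} (hθ0 : 0 < θ) (hθ1 : θ ≤ 1) {A : ℕ} (hA1 : 1 ≤ A) (hA : 2 * q + 2 ≤ θ * A)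
    (C : Finset T) (ρ : ℝ≥0∞) :
    ∫⁻ ω, ⨆ (x : C) (y : C) (_ : edist (x : T) (y : T) ≤ ρ),
        edist (X (x : T) ω) (X (y : T) ω) ^ p ∂P ≤
      2 ^ p * 2 ^ (A + 1) * 2 ^ (3 * q + 3) * (C.card : ℝ≥0∞) ^ (1 + θ) * M * ρ ^ q := by
  have hptw : ∀ ω, (⨆ (x : C) (y : C) (_ : edist (x : T) (y : T) ≤ ρ),
      edist (X (x : T) ω) (X (y : T) ω) ^ p)
      ≤ 2 ^ p * 2 ^ (A + 1) * kS C ρ A (fun t => X t ω) p := by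
    intro ω
    refine iSup_le fun x => iSup_le fun y => iSup_le fun hxy => ?_
    exact star_pointwise C ρ hA1 (fun t => X t ω) hp x.2 y.2 hxy
  calc ∫⁻ ω, ⨆ (x : C) (y : C) (_ : edist (x : T) (y : T) ≤ ρ),
        edist (X (x : T) ω) (X (y : T) ω) ^ p ∂P
      ≤ ∫⁻ ω, 2 ^ p * 2 ^ (A + 1) * kS C ρ A (fun t => X t ω) p ∂P := lintegral_mono hptw
    _ = 2 ^ p * 2 ^ (A + 1) * ∫⁻ ω, kS C ρ A (fun t => X t ω) p ∂P :=
        lintegral_const_mul _ (measurable_kS hX C ρ A)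
    _ ≤ 2 ^ p * 2 ^ (A + 1) *
        (M * ρ ^ q * ∑' j : ℕ, ((kthr C ρ A j).card : ℝ≥0∞) * 2 ^ (((j : ℝ) + 1) * q)) := by
        exact mul_le_mul' le_rfl (lintegral_kS_le hX hq.le C ρ A)
    _ ≤ 2 ^ p * 2 ^ (A + 1) * (M * ρ ^ q * (2 ^ (3 * q + 3) * (C.card : ℝ≥0∞) ^ (1 + θ))) := by
        refine mul_le_mul' le_rfl (mul_le_mul' le_rfl ?_)
        refine le_trans (ENNReal.tsum_le_tsum fun j => ?_) (series_le hq hθ0 hθ1 hA C.card)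
        exact mul_le_mul' (kthr_card_le C ρ A j) le_rfl
    _ = 2 ^ p * 2 ^ (A + 1) * 2 ^ (3 * q + 3) * (C.card : ℝ≥0∞) ^ (1 + θ) * M * ρ ^ q := by
        ring


-- ### main theorem test scaffold ###

section Main

variable {T : Type*} [PseudoEMetricSpace T]

theorem main_aux {T : Type*} [PseudoEMetricSpace T]
    {c : ℝ≥0} {d p q β : ℝ}
    (hc : 0 < c) (hd : 0 < d) (hp : 0 < p) (hq : d < q)
    (hT : ∀ ε : ℝ≥0∞, 0 < ε → ε ≤ EMetric.diam (Set.univ : Set T) →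
      ∃ S : Finset T, ↑S ⊆ (Set.univ : Set T) ∧ (∀ t ∈ (Set.univ : Set T), ∃ s ∈ S, edist t s ≤ ε) ∧
      (S.card : ℝ≥0∞) ≤ c * ε ^ (-d))
    (hβ : β ∈ Set.Ioo 0 ((q - d) / p)) :
    ∃ L : ℝ≥0∞, L ≠ ∞ ∧
      ∀ (Ω E : Type*) [MeasurableSpace Ω] [PseudoEMetricSpace E]
        (P : Measure Ω), ∀ (_ : IsProbabilityMeasure P), ∀ (X : T → Ω → E) (M : ℝ≥0),
        IsKolmogorovProcess X P p q M →
        ∀ T' : Set T, T'.Countable →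
          ∫⁻ ω, ⨆ (s) (_ : s ∈ T') (t) (_ : t ∈ T'),
              edist (X s ω) (X t ω) ^ p / edist s t ^ (β * p) ∂P ≤ (M : ℝ≥0∞) * L := by
  classical
  obtain ⟨hβ0, hβq⟩ := hβ
  have hq0 : 0 < q := hd.trans hq
  have hβp : β * p < q - d := by
    rw [lt_div_iff₀ hp] at hβq
    linarith
  have hβp0 : 0 < β * p := mul_pos hβ0 hp
  -- degenerate case: diameter zero
  by_cases hD0 : EMetric.diam (Set.univ : Set T) = 0
  · refine ⟨1, one_ne_top, ?_⟩
    intro Ω E _ _ P hP X M hX T' hT'c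
    have hae : ∀ᵐ ω ∂P, ∀ u ∈ T', ∀ v ∈ T', edist (X u ω) (X v ω) ^ p = 0 := by
      rw [ae_ball_iff hT'c]
      intro u hu
      rw [ae_ball_iff hT'c]
      intro v hv
      have h0 : edist u v = 0 := by
        have := EMetric.edist_le_diam_of_mem (mem_univ u) (mem_univ v)
        replace this := this.trans hD0.le
        exact le_antisymm this (zero_le)
      have hz : ∫⁻ ω, edist (X u ω) (X v ω) ^ p ∂P = 0 := by
        refine le_antisymm (le_trans (hX.2 u v) ?_) (zero_le)
        rw [h0, ENNReal.zero_rpow_of_pos hq0, mul_zero]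
      have := (lintegral_eq_zero_iff (measurable_edistX_rpow hX u v)).mp hz
      filter_upwards [this] with ω h using h
    calc ∫⁻ ω, ⨆ (s) (_ : s ∈ T') (t) (_ : t ∈ T'),
          edist (X s ω) (X t ω) ^ p / edist s t ^ (β * p) ∂P
        ≤ ∫⁻ _ω, (0 : ℝ≥0∞) ∂P := by
          apply lintegral_mono_ae
          filter_upwards [hae] with ω h
          refine iSup_le fun u => iSup_le fun hu => iSup_le fun v => iSup_le fun hv => ?_
          rw [h u hu v hv, ENNReal.zero_div]
      _ ≤ M * 1 := by simp
  -- diameter is finite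
  have hDT : EMetric.diam (Set.univ : Set T) ≠ ∞ := by
    intro hDi
    obtain ⟨S, _, hcov, hcard⟩ := hT ∞ (by simp) (le_of_eq hDi.symm)
    rw [ENNReal.top_rpow_of_neg (by linarith), mul_zero] at hcard
    have hS : S = ∅ := by
      rw [← Finset.card_eq_zero]
      exact_mod_cast le_antisymm hcard (zero_le)
    have hne : Nonempty T := by
      by_contra hE
      rw [not_nonempty_iff] at hE
      rw [Set.univ_eq_empty_iff.2 hE] at hDi
      simp [EMetric.diam] at hDi
    obtain ⟨t⟩ := hne
    obtain ⟨s, hs, _⟩ := hcov t (mem_univ t)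
    rw [hS] at hs
    simp at hs
  set D := EMetric.diam (Set.univ : Set T) with hDdef
  -- dyadic scales
  set εn : ℕ → ℝ≥0∞ := fun n => D / 2 ^ n with hεn
  have h2n0 : ∀ n : ℕ, ((2 : ℝ≥0∞) ^ n) ≠ 0 := fun n => by positivity
  have h2nT : ∀ n : ℕ, ((2 : ℝ≥0∞) ^ n) ≠ ∞ := fun n => pow_ne_top (by norm_num)
  have hεpos : ∀ n, 0 < εn n := fun n => ENNReal.div_pos hD0 (h2nT n)
  have hεT : ∀ n, εn n ≠ ∞ := fun n => (ENNReal.div_lt_top hDT (h2n0 n)).ne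
  have hεle : ∀ n, εn n ≤ D := by
    intro n
    calc εn n ≤ D / 2 ^ 0 := by
          apply ENNReal.div_le_div_left
          exact one_le_pow_of_one_le' (one_le_two : (1:ℝ≥0∞) ≤ 2) n
      _ = D := by simp
  have hεmono : ∀ n, εn (n + 1) ≤ εn n := by
    intro n
    apply ENNReal.div_le_div_left
    exact pow_le_pow_right₀ one_le_two (Nat.le_succ n)
  -- nets and projections
  have hnets : ∀ n : ℕ, ∃ S : Finset T, ↑S ⊆ (Set.univ : Set T) ∧
      (∀ t ∈ (Set.univ : Set T), ∃ s ∈ S, edist t s ≤ εn n) ∧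
      (S.card : ℝ≥0∞) ≤ c * (εn n) ^ (-d) := fun n => hT (εn n) (hεpos n) (hεle n)
  choose CC _hCC1 hCC2 hCC3 using hnets
  have hproj : ∀ (n : ℕ) (t : T), ∃ s, s ∈ CC n ∧ edist t s ≤ εn n := by
    intro n t
    obtain ⟨s, h1, h2⟩ := hCC2 n t (mem_univ t)
    exact ⟨s, h1, h2⟩
  choose π hπmem hπdist using hproj
  -- parameters
  set g : ℝ := q - d - β * p with hgdef
  have hg : 0 < g := by rw [hgdef]; linarith
  set θ : ℝ := min 1 (g / (3 * d)) with hθdef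
  have hθ0 : 0 < θ := lt_min one_pos (by positivity)
  have hθ1 : θ ≤ 1 := min_le_left _ _
  have hdθ : d * θ ≤ g / 3 := by
    calc d * θ ≤ d * (g / (3 * d)) := mul_le_mul_of_nonneg_left (min_le_right _ _) hd.le
      _ = g / 3 := by field_simp
  set β' : ℝ := β + g / (3 * p) with hβ'def
  have hβ'0 : 0 < β' := by positivity
  have hpne : p ≠ 0 := hp.ne'
  have hβ'p : β' * p = β * p + g / 3 := by rw [hβ'def]; field_simp
  set A : ℕ := max 1 ⌈(2 * q + 2) / θ⌉₊ with hAdef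
  have hA1 : 1 ≤ A := le_max_left _ _
  have hA : 2 * q + 2 ≤ θ * A := by
    have h1 : (2 * q + 2) / θ ≤ (A : ℝ) := by
      refine le_trans (Nat.le_ceil _) ?_
      exact_mod_cast le_max_right 1 ⌈(2 * q + 2) / θ⌉₊
    calc 2 * q + 2 = θ * ((2 * q + 2) / θ) := by field_simp
      _ ≤ θ * A := mul_le_mul_of_nonneg_left h1 hθ0.le
  -- scale powers
  have hεpow : ∀ (k : ℕ) (a : ℝ), (εn k) ^ a = D ^ a * 2 ^ (-((k : ℝ) * a)) := by
    intro k a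
    have h1 : εn k = D * ((2 : ℝ≥0∞) ^ k)⁻¹ := by simp only [hεn]; rw [div_eq_mul_inv]
    rw [h1, ENNReal.mul_rpow_of_ne_top hDT (by simp [h2n0 k]),
      ENNReal.inv_rpow, ← ENNReal.rpow_natCast 2 k, ← ENNReal.rpow_mul,
      ← ENNReal.rpow_neg]
  have rpow_nat_mul : ∀ (x : ℝ≥0∞) (n : ℕ) (a : ℝ), x ^ ((n : ℝ) * a) = (x ^ a) ^ n := by
    intro x n a
    rw [mul_comm, ENNReal.rpow_mul, ENNReal.rpow_natCast]
  have rpow_ne_top' : ∀ {x : ℝ≥0∞}, x ≠ 0 → x ≠ ∞ → ∀ (y : ℝ), x ^ y ≠ ∞ := by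
    intro x hx0 hxT y
    simp [ENNReal.rpow_eq_top_iff, hx0, hxT]
  -- constants
  set Kc : ℝ≥0∞ := (c : ℝ≥0∞) * D ^ (-d) * (1 + 2 ^ d) with hKcdef
  set SC : ℝ≥0∞ := 2 ^ p * 2 ^ (A + 1) * 2 ^ (3 * q + 3) with hSCdef
  set CW : ℝ≥0∞ := SC * Kc ^ (1 + θ) * 3 ^ q * D ^ q with hCWdef
  set r0 : ℝ≥0∞ := 2 ^ (d * (1 + θ) - q) with hr0def
  set r3 : ℝ≥0∞ := 2 ^ (β' * p) with hr3def
  set r4 : ℝ≥0∞ := 2 ^ β' with hr4def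
  set sg : ℝ≥0∞ := (1 - r4⁻¹)⁻¹ with hsgdef
  set r5 : ℝ≥0∞ := r3 * r0 with hr5def
  set r6 : ℝ≥0∞ := 2 ^ (β * p) * r0 with hr6def
  set L : ℝ≥0∞ :=
    D ^ (-(β * p)) * 2 ^ (β * p) * 3 ^ p * sg ^ p * CW * (1 - r5)⁻¹ * (1 - r6)⁻¹ with hLdef
  -- basic facts about the constants
  have hr4gt1 : (1 : ℝ≥0∞) < r4 := by
    rw [hr4def]
    calc (1 : ℝ≥0∞) = 2 ^ (0 : ℝ) := by rw [ENNReal.rpow_zero]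
      _ < 2 ^ β' := ENNReal.rpow_lt_rpow_of_exponent_lt one_lt_two ENNReal.ofNat_ne_top hβ'0
  have hr4inv : r4⁻¹ < 1 := ENNReal.inv_lt_one.2 hr4gt1
  have hsub0 : (1 : ℝ≥0∞) - r4⁻¹ ≠ 0 := by
    rw [Ne, tsub_eq_zero_iff_le]
    exact not_le.2 hr4inv
  have hsgT : sg ≠ ∞ := by rw [hsgdef]; simp [hsub0]
  have hsg0 : sg ≠ 0 := by
    rw [hsgdef]
    simp only [Ne, ENNReal.inv_eq_zero]
    exact (ne_top_of_le_ne_top ENNReal.one_ne_top tsub_le_self)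
  have hrpowlt1 : ∀ a : ℝ, a < 0 → (2 : ℝ≥0∞) ^ a < 1 := by
    intro a ha
    calc (2 : ℝ≥0∞) ^ a < 2 ^ (0 : ℝ) :=
        ENNReal.rpow_lt_rpow_of_exponent_lt one_lt_two ENNReal.ofNat_ne_top ha
      _ = 1 := by rw [ENNReal.rpow_zero]
  have hr5lt1 : r5 < 1 := by
    rw [hr5def, hr3def, hr0def, ← ENNReal.rpow_add _ _ (by norm_num) ENNReal.ofNat_ne_top]
    apply hrpowlt1
    rw [hβ'p]
    nlinarith [hdθ, hg]
  have hr6lt1 : r6 < 1 := by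
    rw [hr6def, hr0def, ← ENNReal.rpow_add _ _ (by norm_num) ENNReal.ofNat_ne_top]
    apply hrpowlt1
    nlinarith [hdθ, hg]
  have hKc0 : Kc ≠ 0 := by
    rw [hKcdef]
    have h1 : ((c : ℝ≥0∞)) ≠ 0 := by exact_mod_cast hc.ne'
    have h2 : (D : ℝ≥0∞) ^ (-d) ≠ 0 := by
      simp [ENNReal.rpow_eq_zero_iff, hD0, hDT]
    have h3 : (1 : ℝ≥0∞) + 2 ^ d ≠ 0 := by
      simp [add_eq_zero]
    exact mul_ne_zero (mul_ne_zero h1 h2) h3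
  have hKcT : Kc ≠ ∞ := by
    rw [hKcdef]
    exact ENNReal.mul_ne_top (ENNReal.mul_ne_top (ENNReal.coe_ne_top)
      (rpow_ne_top' hD0 hDT _)) (by simp [rpow_ne_top' (two_ne_zero) ENNReal.ofNat_ne_top d,
        ENNReal.add_ne_top, two_rpow_ne_top])
  have hCWT : CW ≠ ∞ := by
    rw [hCWdef, hSCdef]
    refine ENNReal.mul_ne_top (ENNReal.mul_ne_top (ENNReal.mul_ne_top ?_ ?_) ?_) ?_
    · exact ENNReal.mul_ne_top (ENNReal.mul_ne_top two_rpow_ne_top (pow_ne_top ENNReal.ofNat_ne_top)) two_rpow_ne_top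
    · exact rpow_ne_top' hKc0 hKcT _
    · exact rpow_ne_top' (by norm_num) (by norm_num) _
    · exact rpow_ne_top' hD0 hDT _
  have hLT : L ≠ ∞ := by
    rw [hLdef]
    refine ENNReal.mul_ne_top (ENNReal.mul_ne_top (ENNReal.mul_ne_top (ENNReal.mul_ne_top
      (ENNReal.mul_ne_top (ENNReal.mul_ne_top ?_ ?_) ?_) ?_) ?_) ?_) ?_
    · exact rpow_ne_top' hD0 hDT _
    · exact two_rpow_ne_top
    · exact rpow_ne_top' (by norm_num) (by norm_num) _
    · exact rpow_ne_top' hsg0 hsgT _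
    · exact hCWT
    · simp [Ne, ENNReal.inv_eq_top, tsub_eq_zero_iff_le, not_le, hr5lt1]
    · simp [Ne, ENNReal.inv_eq_top, tsub_eq_zero_iff_le, not_le, hr6lt1]
  refine ⟨L, hLT, ?_⟩
  intro Ω E mΩ pE P hP X M hX T' hT'c
  set Un : ℕ → Finset T := fun n => CC n ∪ CC (n + 1) with hUndef
  set W : ℕ → Ω → ℝ≥0∞ := fun n ω =>
    ⨆ (x : (Un n : Finset T)) (y : (Un n : Finset T)) (_ : edist (x : T) (y : T) ≤ 3 * εn n),
      edist (X (x : T) ω) (X (y : T) ω) ^ p with hWdef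
  have hWmeas : ∀ n, Measurable (W n) := by
    intro n
    apply Measurable.iSup
    intro x
    apply Measurable.iSup
    intro y
    apply Measurable.iSup
    intro _
    exact measurable_edistX_rpow hX _ _
  -- the cardinality bound for the union nets
  have hcard : ∀ n, ((Un n).card : ℝ≥0∞) ≤ Kc * 2 ^ ((n : ℝ) * d) := by
    intro n
    calc ((Un n).card : ℝ≥0∞) ≤ ((CC n).card + (CC (n + 1)).card : ℕ) := by
          exact_mod_cast Finset.card_union_le _ _
      _ = ((CC n).card : ℝ≥0∞) + ((CC (n + 1)).card : ℝ≥0∞) := by push_cast; ring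
      _ ≤ c * (εn n) ^ (-d) + c * (εn (n + 1)) ^ (-d) := add_le_add (hCC3 n) (hCC3 (n + 1))
      _ = c * (D ^ (-d) * 2 ^ ((n : ℝ) * d)) + c * (D ^ (-d) * 2 ^ (((n : ℝ) + 1) * d)) := by
          rw [hεpow n (-d), hεpow (n + 1) (-d)]
          push_cast
          ring_nf
      _ = Kc * 2 ^ ((n : ℝ) * d) := by
          rw [hKcdef, show ((n : ℝ) + 1) * d = (n : ℝ) * d + d by ring,
            ENNReal.rpow_add _ _ (by norm_num) ENNReal.ofNat_ne_top]
          ring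
  -- the expected value of W n
  have hEW : ∀ n, ∫⁻ ω, W n ω ∂P ≤ CW * M * r0 ^ n := by
    intro n
    have h1 := star_expect hX hp hq0 hθ0 hθ1 hA1 hA (Un n) (3 * εn n)
    calc ∫⁻ ω, W n ω ∂P
        ≤ SC * ((Un n).card : ℝ≥0∞) ^ (1 + θ) * M * (3 * εn n) ^ q := by
          rw [hSCdef]
          exact h1
      _ ≤ SC * (Kc ^ (1 + θ) * 2 ^ ((n : ℝ) * (d * (1 + θ)))) * M * (3 ^ q * (εn n) ^ q) := by
          have hc1 : ((Un n).card : ℝ≥0∞) ^ (1 + θ) ≤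
              Kc ^ (1 + θ) * 2 ^ ((n : ℝ) * (d * (1 + θ))) := by
            calc ((Un n).card : ℝ≥0∞) ^ (1 + θ) ≤ (Kc * 2 ^ ((n : ℝ) * d)) ^ (1 + θ) :=
                  ENNReal.rpow_le_rpow (hcard n) (by linarith)
              _ = Kc ^ (1 + θ) * 2 ^ ((n : ℝ) * (d * (1 + θ))) := by
                  rw [ENNReal.mul_rpow_of_nonneg _ _ (by linarith : (0:ℝ) ≤ 1 + θ),
                    ← ENNReal.rpow_mul]
                  ring_nf
          have hc2 : ((3 : ℝ≥0∞) * εn n) ^ q = 3 ^ q * (εn n) ^ q :=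
            ENNReal.mul_rpow_of_nonneg _ _ hq0.le
          rw [hc2]
          gcongr
      _ = CW * M * (2 ^ ((n : ℝ) * (d * (1 + θ))) * 2 ^ (-((n : ℝ) * q))) := by
          rw [hCWdef, hεpow n q]
          ring
      _ = CW * M * r0 ^ n := by
          rw [hr0def, ← ENNReal.rpow_add _ _ (by norm_num) ENNReal.ofNat_ne_top,
            ← rpow_nat_mul 2 n (d * (1 + θ) - q)]
          ring_nf
  -- the almost-everywhere good event
  have hgood1 : ∀ᵐ ω ∂P, ∀ u ∈ T', ∀ v ∈ T',
      edist u v = 0 → edist (X u ω) (X v ω) ^ p = 0 := by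
    rw [ae_ball_iff hT'c]
    intro u hu
    rw [ae_ball_iff hT'c]
    intro v hv
    by_cases h0 : edist u v = 0
    · have hz : ∫⁻ ω, edist (X u ω) (X v ω) ^ p ∂P = 0 := by
        refine le_antisymm (le_trans (hX.2 u v) ?_) (zero_le)
        rw [h0, ENNReal.zero_rpow_of_pos hq0, mul_zero]
      have := (lintegral_eq_zero_iff (measurable_edistX_rpow hX u v)).mp hz
      filter_upwards [this] with ω h _ using h
    · filter_upwards with ω h using absurd h h0
  have hgood2 : ∀ᵐ ω ∂P, ∀ u ∈ T', ∀ m : ℕ,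
      (⨅ k : ℕ, edist (X u ω) (X (π (m + k) u) ω) ^ p) = 0 := by
    rw [ae_ball_iff hT'c]
    intro u hu
    rw [ae_all_iff]
    intro m
    have hmeasY : Measurable fun ω => ⨅ k : ℕ, edist (X u ω) (X (π (m + k) u) ω) ^ p :=
      Measurable.iInf fun k => measurable_edistX_rpow hX _ _
    have hint : ∫⁻ ω, ⨅ k : ℕ, edist (X u ω) (X (π (m + k) u) ω) ^ p ∂P = 0 := by
      refine le_antisymm ?_ (zero_le)
      have hle : ∀ k : ℕ, ∫⁻ ω, (⨅ k : ℕ, edist (X u ω) (X (π (m + k) u) ω) ^ p) ∂P ≤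
          M * D ^ q * ((2 : ℝ≥0∞) ^ (-q)) ^ (m + k) := by
        intro k
        calc ∫⁻ ω, (⨅ k : ℕ, edist (X u ω) (X (π (m + k) u) ω) ^ p) ∂P
            ≤ ∫⁻ ω, edist (X u ω) (X (π (m + k) u) ω) ^ p ∂P :=
              lintegral_mono fun ω => iInf_le _ k
          _ ≤ M * edist u (π (m + k) u) ^ q := hX.2 u _
          _ ≤ M * (εn (m + k)) ^ q := by
              exact mul_le_mul' le_rfl (ENNReal.rpow_le_rpow (hπdist (m + k) u) hq0.le)
          _ = M * D ^ q * ((2 : ℝ≥0∞) ^ (-q)) ^ (m + k) := by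
              rw [hεpow (m + k) q, ← rpow_nat_mul 2 (m + k) (-q)]
              rw [show -(((m + k : ℕ) : ℝ) * q) = ((m + k : ℕ) : ℝ) * (-q) by ring]
              ring
      have htend : Filter.Tendsto (fun k : ℕ => M * D ^ q * ((2 : ℝ≥0∞) ^ (-q)) ^ (m + k))
          Filter.atTop (nhds 0) := by
        have hlt1 : (2 : ℝ≥0∞) ^ (-q) < 1 := hrpowlt1 _ (by linarith)
        have h1 : Filter.Tendsto (fun k : ℕ => ((2 : ℝ≥0∞) ^ (-q)) ^ k)
            Filter.atTop (nhds 0) := ENNReal.tendsto_pow_atTop_nhds_zero_of_lt_one hlt1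
        have h2 : Filter.Tendsto (fun k : ℕ => ((2 : ℝ≥0∞) ^ (-q)) ^ (m + k))
            Filter.atTop (nhds 0) := by
          simp only [add_comm m]; exact h1.comp (Filter.tendsto_add_atTop_nat m)
        have := ENNReal.Tendsto.const_mul (a := M * D ^ q) h2 (by
          right
          exact ENNReal.mul_ne_top ENNReal.coe_ne_top (rpow_ne_top' hD0 hDT q))
        simpa using this
      exact ge_of_tendsto' htend hle
    exact (lintegral_eq_zero_iff hmeasY).mp hint
  -- the chaining bound for one point
  have hVle : ∀ (n : ℕ) (ω : Ω) (t : T),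
      edist (X (π n t) ω) (X (π (n + 1) t) ω) ≤ (W n ω) ^ p⁻¹ := by
    intro n ω t
    have hd1 : edist (π n t) (π (n + 1) t) ≤ 3 * εn n := by
      calc edist (π n t) (π (n + 1) t) ≤ edist (π n t) t + edist t (π (n + 1) t) :=
            edist_triangle _ _ _
        _ ≤ εn n + εn (n + 1) := by
            refine add_le_add ?_ (hπdist (n + 1) t)
            rw [edist_comm]
            exact hπdist n t
        _ ≤ 3 * εn n := by
            calc εn n + εn (n + 1) ≤ εn n + εn n := add_le_add le_rfl (hεmono n)
              _ ≤ 3 * εn n := by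
                  rw [show (3 : ℝ≥0∞) = 2 + 1 by norm_num, add_mul, two_mul, one_mul]
                  exact le_self_add
    have hmem1 : π n t ∈ Un n := Finset.mem_union_left _ (hπmem n t)
    have hmem2 : π (n + 1) t ∈ Un n := Finset.mem_union_right _ (hπmem (n + 1) t)
    have hW : edist (X (π n t) ω) (X (π (n + 1) t) ω) ^ p ≤ W n ω := by
      have heq : W n ω = ⨆ (x : (Un n : Finset T)) (y : (Un n : Finset T))
          (_ : edist (x : T) (y : T) ≤ 3 * εn n), edist (X (x : T) ω) (X (y : T) ω) ^ p := rfl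
      rw [heq]
      refine le_trans ?_ (le_iSup _ (⟨π n t, hmem1⟩ : (Un n : Finset T)))
      refine le_trans ?_ (le_iSup _ (⟨π (n + 1) t, hmem2⟩ : (Un n : Finset T)))
      exact le_iSup_of_le hd1 le_rfl
    calc edist (X (π n t) ω) (X (π (n + 1) t) ω)
        = (edist (X (π n t) ω) (X (π (n + 1) t) ω) ^ p) ^ p⁻¹ := by
          rw [← ENNReal.rpow_mul, mul_inv_cancel₀ hpne, ENNReal.rpow_one]
      _ ≤ (W n ω) ^ p⁻¹ := ENNReal.rpow_le_rpow hW (by positivity)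
  have hchain : ∀ (ω : Ω), (∀ u ∈ T', ∀ m : ℕ,
      (⨅ k : ℕ, edist (X u ω) (X (π (m + k) u) ω) ^ p) = 0) →
      ∀ u ∈ T', ∀ m : ℕ,
      edist (X u ω) (X (π m u) ω) ≤ ∑' i : ℕ, (W (m + i) ω) ^ p⁻¹ := by
    intro ω hω u hu m
    have hpart : ∀ k : ℕ, edist (X u ω) (X (π m u) ω) ≤
        (∑ i ∈ Finset.range k, (W (m + i) ω) ^ p⁻¹) + edist (X u ω) (X (π (m + k) u) ω) := by
      intro k
      induction k with
      | zero => simp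
      | succ k ih =>
        refine le_trans ih ?_
        have hstep : edist (X u ω) (X (π (m + k) u) ω) ≤
            edist (X u ω) (X (π (m + k + 1) u) ω) + (W (m + k) ω) ^ p⁻¹ := by
          calc edist (X u ω) (X (π (m + k) u) ω)
              ≤ edist (X u ω) (X (π (m + k + 1) u) ω) +
                edist (X (π (m + k + 1) u) ω) (X (π (m + k) u) ω) := edist_triangle _ _ _
            _ ≤ edist (X u ω) (X (π (m + k + 1) u) ω) + (W (m + k) ω) ^ p⁻¹ := by
                rw [edist_comm (X (π (m + k + 1) u) ω)]
                exact add_le_add le_rfl (hVle (m + k) ω u)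
        calc (∑ i ∈ Finset.range k, (W (m + i) ω) ^ p⁻¹) + edist (X u ω) (X (π (m + k) u) ω)
            ≤ (∑ i ∈ Finset.range k, (W (m + i) ω) ^ p⁻¹) +
              (edist (X u ω) (X (π (m + k + 1) u) ω) + (W (m + k) ω) ^ p⁻¹) :=
              add_le_add le_rfl hstep
          _ = (∑ i ∈ Finset.range (k + 1), (W (m + i) ω) ^ p⁻¹) +
              edist (X u ω) (X (π (m + (k + 1)) u) ω) := by
              rw [Finset.sum_range_succ, show m + (k + 1) = m + k + 1 from rfl]
              ring
    have hsub : edist (X u ω) (X (π m u) ω) - (∑' i : ℕ, (W (m + i) ω) ^ p⁻¹) ≤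
        ⨅ k : ℕ, edist (X u ω) (X (π (m + k) u) ω) := by
      refine le_iInf fun k => ?_
      rw [tsub_le_iff_left]
      refine le_trans (hpart k) ?_
      exact add_le_add (ENNReal.sum_le_tsum _) le_rfl
    have hzero : (⨅ k : ℕ, edist (X u ω) (X (π (m + k) u) ω)) = 0 := by
      have h1 : (⨅ k : ℕ, edist (X u ω) (X (π (m + k) u) ω)) ^ p ≤
          ⨅ k : ℕ, edist (X u ω) (X (π (m + k) u) ω) ^ p := by
        refine le_iInf fun k => ?_
        exact ENNReal.rpow_le_rpow (iInf_le _ k) hp.le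
      rw [hω u hu m] at h1
      have h2 : (⨅ k : ℕ, edist (X u ω) (X (π (m + k) u) ω)) ^ p = 0 := le_antisymm h1 (zero_le)
      rwa [ENNReal.rpow_eq_zero_iff_of_pos hp] at h2
    rw [hzero] at hsub
    have h3 : edist (X u ω) (X (π m u) ω) - (∑' i : ℕ, (W (m + i) ω) ^ p⁻¹) = 0 :=
      le_antisymm hsub (zero_le)
    exact tsub_eq_zero_iff_le.mp h3
  -- the dominating function
  set K7 : ℝ≥0∞ := D ^ (-(β * p)) * 2 ^ (β * p) * 3 ^ p * sg ^ p with hK7def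
  set Ψ : Ω → ℝ≥0∞ := fun ω => ∑' m : ℕ,
    (K7 * ((2 : ℝ≥0∞) ^ (β * p)) ^ m) * ⨆ i : ℕ, r3 ^ i * W (m + i) ω with hΨdef
  -- pointwise a.e. domination
  have hdom : ∀ᵐ ω ∂P, (⨆ (s) (_ : s ∈ T') (t) (_ : t ∈ T'),
      edist (X s ω) (X t ω) ^ p / edist s t ^ (β * p)) ≤ Ψ ω := by
    filter_upwards [hgood1, hgood2] with ω h1 h2
    refine iSup_le fun u => iSup_le fun hu => iSup_le fun v => iSup_le fun hv => ?_
    by_cases h0 : edist u v = 0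
    · rw [h1 u hu v hv h0, ENNReal.zero_div]
      exact zero_le
    · -- find the scale of the pair
      have heD : edist u v ≤ D := EMetric.edist_le_diam_of_mem (mem_univ u) (mem_univ v)
      have heT : edist u v ≠ ∞ := ne_top_of_le_ne_top hDT heD
      have hex : ∃ m : ℕ, εn (m + 1) < edist u v := by
        obtain ⟨n₀, hn₀⟩ := ENNReal.exists_nat_gt ((ENNReal.div_lt_top hDT h0).ne)
        have h2n : (n₀ : ℝ≥0∞) ≤ 2 ^ n₀ := by
          have := Nat.lt_two_pow_self (n := n₀)
          exact_mod_cast this.le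
        have hlt : D / 2 ^ n₀ < edist u v := by
          rw [ENNReal.div_lt_iff (Or.inl (h2n0 n₀)) (Or.inl (h2nT n₀))]
          rw [ENNReal.div_lt_iff (Or.inl h0) (Or.inl heT)] at hn₀
          calc D < (n₀ : ℝ≥0∞) * edist u v := hn₀
            _ = edist u v * (n₀ : ℝ≥0∞) := mul_comm _ _
            _ ≤ edist u v * 2 ^ n₀ := mul_le_mul' le_rfl h2n
        refine ⟨n₀, lt_of_le_of_lt ?_ hlt⟩
        exact hεmono n₀
      set m := Nat.find hex with hmdef
      have hm1 : εn (m + 1) < edist u v := Nat.find_spec hex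
      have hm2 : edist u v ≤ εn m := by
        rcases Nat.eq_zero_or_pos m with h | h
        · rw [h]
          have : εn 0 = D := by simp [hεn]
          rw [this]
          exact heD
        · obtain ⟨m', hm'⟩ := Nat.exists_eq_succ_of_ne_zero h.ne'
          have hmin := Nat.find_min hex (m := m') (by omega)
          rw [hm']
          exact not_lt.mp hmin
      set TS : ℝ≥0∞ := ∑' i : ℕ, (W (m + i) ω) ^ p⁻¹ with hTSdef
      -- the chaining bound
      have hkey : edist (X u ω) (X v ω) ≤ 3 * TS := by
        have c1 : edist (X u ω) (X (π m u) ω) ≤ TS := hchain ω h2 u hu m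
        have c3 : edist (X v ω) (X (π m v) ω) ≤ TS := hchain ω h2 v hv m
        have cmid : edist (X (π m u) ω) (X (π m v) ω) ≤ TS := by
          have hd1 : edist (π m u) (π m v) ≤ 3 * εn m := by
            calc edist (π m u) (π m v)
                ≤ edist (π m u) u + (edist u v + edist v (π m v)) := by
                  calc edist (π m u) (π m v) ≤ edist (π m u) v + edist v (π m v) :=
                        edist_triangle _ _ _
                    _ ≤ (edist (π m u) u + edist u v) + edist v (π m v) :=
                        add_le_add (edist_triangle _ _ _) le_rfl
                    _ = edist (π m u) u + (edist u v + edist v (π m v)) := by ring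
              _ ≤ εn m + (εn m + εn m) := by
                  refine add_le_add ?_ (add_le_add hm2 (hπdist m v))
                  rw [edist_comm]
                  exact hπdist m u
              _ = 3 * εn m := by ring
          have hmem1 : π m u ∈ Un m := Finset.mem_union_left _ (hπmem m u)
          have hmem2 : π m v ∈ Un m := Finset.mem_union_left _ (hπmem m v)
          have hW : edist (X (π m u) ω) (X (π m v) ω) ^ p ≤ W m ω := by
            have heq : W m ω = ⨆ (x : (Un m : Finset T)) (y : (Un m : Finset T))
                (_ : edist (x : T) (y : T) ≤ 3 * εn m),
                edist (X (x : T) ω) (X (y : T) ω) ^ p := rfl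
            rw [heq]
            refine le_trans ?_ (le_iSup _ (⟨π m u, hmem1⟩ : (Un m : Finset T)))
            refine le_trans ?_ (le_iSup _ (⟨π m v, hmem2⟩ : (Un m : Finset T)))
            exact le_iSup_of_le hd1 le_rfl
          have : edist (X (π m u) ω) (X (π m v) ω) ≤ (W m ω) ^ p⁻¹ := by
            calc edist (X (π m u) ω) (X (π m v) ω)
                = (edist (X (π m u) ω) (X (π m v) ω) ^ p) ^ p⁻¹ := by
                  rw [← ENNReal.rpow_mul, mul_inv_cancel₀ hpne, ENNReal.rpow_one]
              _ ≤ (W m ω) ^ p⁻¹ := ENNReal.rpow_le_rpow hW (by positivity)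
          refine le_trans this ?_
          exact ENNReal.le_tsum 0
        calc edist (X u ω) (X v ω)
            ≤ edist (X u ω) (X (π m u) ω) + (edist (X (π m u) ω) (X (π m v) ω) +
              edist (X (π m v) ω) (X v ω)) := by
              calc edist (X u ω) (X v ω)
                  ≤ edist (X u ω) (X (π m v) ω) + edist (X (π m v) ω) (X v ω) :=
                    edist_triangle _ _ _
                _ ≤ (edist (X u ω) (X (π m u) ω) + edist (X (π m u) ω) (X (π m v) ω)) +
                    edist (X (π m v) ω) (X v ω) := add_le_add (edist_triangle _ _ _) le_rfl
                _ = _ := by ring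
          _ ≤ TS + (TS + TS) := by
              refine add_le_add c1 (add_le_add cmid ?_)
              rw [edist_comm]
              exact c3
          _ = 3 * TS := by ring
      -- from the chaining bound to the m-th term of Ψ
      have hquot : edist (X u ω) (X v ω) ^ p / edist u v ^ (β * p) ≤
          (3 * TS) ^ p * (D ^ (-(β * p)) * 2 ^ (β * p) * ((2 : ℝ≥0∞) ^ (β * p)) ^ m) := by
        have hden : (εn (m + 1)) ^ (β * p) ≤ edist u v ^ (β * p) :=
          ENNReal.rpow_le_rpow hm1.le hβp0.le
        calc edist (X u ω) (X v ω) ^ p / edist u v ^ (β * p)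
            ≤ (3 * TS) ^ p / (εn (m + 1)) ^ (β * p) :=
              ENNReal.div_le_div (ENNReal.rpow_le_rpow hkey hp.le) hden
          _ = (3 * TS) ^ p * (εn (m + 1)) ^ (-(β * p)) := by
              rw [div_eq_mul_inv, ← ENNReal.rpow_neg]
          _ = (3 * TS) ^ p * (D ^ (-(β * p)) * 2 ^ (β * p) * ((2 : ℝ≥0∞) ^ (β * p)) ^ m) := by
              rw [hεpow (m + 1) (-(β * p))]
              congr 1
              rw [show -((((m + 1) : ℕ) : ℝ) * -(β * p)) = β * p + (m : ℝ) * (β * p) by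
                push_cast; ring]
              rw [ENNReal.rpow_add _ _ (by norm_num) ENNReal.ofNat_ne_top,
                rpow_nat_mul 2 m (β * p)]
              ring
      -- the sup-term bound
      have hsup : (3 * TS) ^ p ≤ 3 ^ p * sg ^ p * ⨆ i : ℕ, r3 ^ i * W (m + i) ω := by
        have hS : TS ≤ sg * ⨆ i : ℕ, r4 ^ i * (W (m + i) ω) ^ p⁻¹ := by
          set S : ℝ≥0∞ := ⨆ i : ℕ, r4 ^ i * (W (m + i) ω) ^ p⁻¹ with hSdef
          have hterm : ∀ i : ℕ, (W (m + i) ω) ^ p⁻¹ ≤ (r4⁻¹) ^ i * S := by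
            intro i
            have h1 : (W (m + i) ω) ^ p⁻¹ = (r4⁻¹) ^ i * (r4 ^ i * (W (m + i) ω) ^ p⁻¹) := by
              rw [← mul_assoc, ← mul_pow, ENNReal.inv_mul_cancel (by
                  rw [hr4def]; simp [ENNReal.rpow_eq_zero_iff]) (by
                  rw [hr4def]; exact two_rpow_ne_top), one_pow, one_mul]
            rw [h1]
            exact mul_le_mul' le_rfl (le_iSup (fun i => r4 ^ i * (W (m + i) ω) ^ p⁻¹) i)
          calc TS ≤ ∑' i : ℕ, (r4⁻¹) ^ i * S := ENNReal.tsum_le_tsum hterm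
            _ = (∑' i : ℕ, (r4⁻¹) ^ i) * S := ENNReal.tsum_mul_right
            _ = sg * S := by rw [ENNReal.tsum_geometric, hsgdef]
        calc (3 * TS) ^ p = 3 ^ p * TS ^ p := ENNReal.mul_rpow_of_nonneg _ _ hp.le
          _ ≤ 3 ^ p * (sg * ⨆ i : ℕ, r4 ^ i * (W (m + i) ω) ^ p⁻¹) ^ p :=
              mul_le_mul' le_rfl (ENNReal.rpow_le_rpow hS hp.le)
          _ = 3 ^ p * (sg ^ p * (⨆ i : ℕ, r4 ^ i * (W (m + i) ω) ^ p⁻¹) ^ p) := by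
              rw [ENNReal.mul_rpow_of_nonneg _ _ hp.le]
          _ ≤ 3 ^ p * (sg ^ p * ⨆ i : ℕ, (r4 ^ i * (W (m + i) ω) ^ p⁻¹) ^ p) := by
              refine mul_le_mul' le_rfl (mul_le_mul' le_rfl ?_)
              exact iSup_rpow_le _ hp
          _ = 3 ^ p * sg ^ p * ⨆ i : ℕ, r3 ^ i * W (m + i) ω := by
              rw [← mul_assoc]
              congr 1
              apply iSup_congr
              intro i
              have hWid : (W (m + i) ω ^ p⁻¹) ^ p = W (m + i) ω := by
                rw [← ENNReal.rpow_mul, inv_mul_cancel₀ hpne, ENNReal.rpow_one]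
              have hr43 : (r4 : ℝ≥0∞) ^ p = r3 := by
                rw [hr4def, hr3def, ← ENNReal.rpow_mul]
              rw [ENNReal.mul_rpow_of_nonneg _ _ hp.le, pow_rpow_comm, hWid, hr43]
      -- conclude : bounded by the m-th term of Ψ
      have hfinal : edist (X u ω) (X v ω) ^ p / edist u v ^ (β * p) ≤
          (K7 * ((2 : ℝ≥0∞) ^ (β * p)) ^ m) * ⨆ i : ℕ, r3 ^ i * W (m + i) ω := by
        refine le_trans hquot ?_
        calc (3 * TS) ^ p * (D ^ (-(β * p)) * 2 ^ (β * p) * ((2 : ℝ≥0∞) ^ (β * p)) ^ m)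
            ≤ (3 ^ p * sg ^ p * ⨆ i : ℕ, r3 ^ i * W (m + i) ω) *
              (D ^ (-(β * p)) * 2 ^ (β * p) * ((2 : ℝ≥0∞) ^ (β * p)) ^ m) :=
              mul_le_mul' hsup le_rfl
          _ = (K7 * ((2 : ℝ≥0∞) ^ (β * p)) ^ m) * ⨆ i : ℕ, r3 ^ i * W (m + i) ω := by
              rw [hK7def]
              ring
      refine le_trans hfinal ?_
      exact ENNReal.le_tsum m
  -- integrate the dominating function
  have hΨmeas : ∀ m : ℕ, Measurable fun ω => (K7 * ((2 : ℝ≥0∞) ^ (β * p)) ^ m) *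
      ⨆ i : ℕ, r3 ^ i * W (m + i) ω := by
    intro m
    exact (Measurable.iSup fun i => (hWmeas (m + i)).const_mul _).const_mul _
  have hint : ∫⁻ ω, Ψ ω ∂P ≤ M * L := by
    have h1 : ∫⁻ ω, Ψ ω ∂P = ∑' m : ℕ, (K7 * ((2 : ℝ≥0∞) ^ (β * p)) ^ m) *
        ∫⁻ ω, ⨆ i : ℕ, r3 ^ i * W (m + i) ω ∂P := by
      rw [hΨdef]
      rw [lintegral_tsum fun m => (hΨmeas m).aemeasurable]
      congr 1
      ext m
      exact lintegral_const_mul _ (Measurable.iSup fun i => (hWmeas (m + i)).const_mul _)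
    have h2 : ∀ m : ℕ, ∫⁻ ω, (⨆ i : ℕ, r3 ^ i * W (m + i) ω) ∂P ≤
        CW * M * r0 ^ m * (1 - r5)⁻¹ := by
      intro m
      calc ∫⁻ ω, (⨆ i : ℕ, r3 ^ i * W (m + i) ω) ∂P
          ≤ ∫⁻ ω, (∑' i : ℕ, r3 ^ i * W (m + i) ω) ∂P := by
            apply lintegral_mono
            intro ω
            exact iSup_le fun i => ENNReal.le_tsum i
        _ = ∑' i : ℕ, ∫⁻ ω, r3 ^ i * W (m + i) ω ∂P :=
            lintegral_tsum fun i => ((hWmeas (m + i)).const_mul _).aemeasurable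
        _ ≤ ∑' i : ℕ, r3 ^ i * (CW * M * r0 ^ (m + i)) := by
            refine ENNReal.tsum_le_tsum fun i => ?_
            rw [lintegral_const_mul _ (hWmeas (m + i))]
            exact mul_le_mul' le_rfl (hEW (m + i))
        _ = ∑' i : ℕ, (CW * M * r0 ^ m) * r5 ^ i := by
            congr 1
            ext i
            rw [hr5def, pow_add, mul_pow]
            ring
        _ = (CW * M * r0 ^ m) * (1 - r5)⁻¹ := by
            rw [ENNReal.tsum_mul_left, ENNReal.tsum_geometric]
        _ = CW * M * r0 ^ m * (1 - r5)⁻¹ := by ring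
    calc ∫⁻ ω, Ψ ω ∂P
        = ∑' m : ℕ, (K7 * ((2 : ℝ≥0∞) ^ (β * p)) ^ m) *
          ∫⁻ ω, ⨆ i : ℕ, r3 ^ i * W (m + i) ω ∂P := h1
      _ ≤ ∑' m : ℕ, (K7 * ((2 : ℝ≥0∞) ^ (β * p)) ^ m) * (CW * M * r0 ^ m * (1 - r5)⁻¹) :=
          ENNReal.tsum_le_tsum fun m => mul_le_mul' le_rfl (h2 m)
      _ = ∑' m : ℕ, (K7 * CW * M * (1 - r5)⁻¹) * r6 ^ m := by
          congr 1
          ext m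
          rw [hr6def, mul_pow]
          ring
      _ = (K7 * CW * M * (1 - r5)⁻¹) * (1 - r6)⁻¹ := by
          rw [ENNReal.tsum_mul_left, ENNReal.tsum_geometric]
      _ = M * L := by
          rw [hLdef, hK7def, hCWdef]
          ring
  calc ∫⁻ ω, ⨆ (s) (_ : s ∈ T') (t) (_ : t ∈ T'),
        edist (X s ω) (X t ω) ^ p / edist s t ^ (β * p) ∂P
      ≤ ∫⁻ ω, Ψ ω ∂P := lintegral_mono_ae hdom
    _ ≤ M * L := hint

end Main

end KCAux


/-- **Kolmogorov–Chentsov inequality.** Let `T` be a pseudo-emetric space with bounded covering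
number with constant `c > 0` and exponent `d > 0`. For all exponents `p > 0`, `q > d` and every
`β ∈ (0, (q - d) / p)` there is a finite constant `L` (depending only on `T, c, d, p, q, β`) such
that for every process `X` with values in a pseudo-emetric space `E` satisfying the Kolmogorov
condition for `(p, q)` with constant `M`, and every countable `T' ⊆ T`,
`E[⨆ (s t ∈ T'), d_E(X s, X t) ^ p / d_T(s, t) ^ (β * p)] ≤ M * L`
(with the `ℝ≥0∞` convention `0 / 0 = 0`). -/
theorem kolmogorov_chentsov_inequality {T : Type*} [PseudoEMetricSpace T]
    {c : ℝ≥0} {d p q β : ℝ}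
    (hc : 0 < c) (hd : 0 < d) (hp : 0 < p) (hq : d < q)
    (hT : HasBoundedInternalCoveringNumber (Set.univ : Set T) c d)
    (hβ : β ∈ Set.Ioo 0 ((q - d) / p)) :
    ∃ L : ℝ≥0∞, L ≠ ∞ ∧
      ∀ (Ω E : Type*) [MeasurableSpace Ω] [PseudoEMetricSpace E]
        (P : Measure Ω), ∀ (_ : IsProbabilityMeasure P), ∀ (X : T → Ω → E) (M : ℝ≥0),
        IsKolmogorovProcess X P p q M →
        ∀ T' : Set T, T'.Countable →
          ∫⁻ ω, ⨆ (s) (_ : s ∈ T') (t) (_ : t ∈ T'),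
              edist (X s ω) (X t ω) ^ p / edist s t ^ (β * p) ∂P ≤ (M : ℝ≥0∞) * L := by
  exact KCAux.main_aux hc hd hp hq hT hβ
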